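/- Performance-difference identity (basis of trust region policy optimization, Equation (4) of the paper): for any two policies π_new and π_old, (1−γ)(V(π_new) − V(π_old)) = Σ_{a∈A, s∈S} π_new(a|s) A^{π_old}(a,s) d^{π_new,ν}(s). -/

import Mathlib

namespace VEPO

variable {S A : Type} [Fintype S] [Fintype A] [DecidableEq S] [DecidableEq A]

/-- A probability mass function on a finite type, represented as a real-valued function. -/
def IsPMF {X : Type} [Fintype X] (f : X → ℝ) : Prop :=
  (∀ x, 0 ≤ f x) ∧ ∑ x : X, f x = 1

/-- A transition kernel: for each action-state pair `(a, s)`, a pmf `p a s` on next states. -/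
def IsKernel (p : A → S → S → ℝ) : Prop := ∀ a s, IsPMF (p a s)

/-- A policy: for each state `s`, a pmf `π s` on actions. -/
def IsPolicy (π : S → A → ℝ) : Prop := ∀ s, IsPMF (π s)

/-- The `t`-step visitation probability `p_t^π(s' | a, s)`. -/
def visit (p : A → S → S → ℝ) (π : S → A → ℝ) : ℕ → A → S → S → ℝ
  | 0, _, s, s' => if s' = s then 1 else 0
  | 1, a, s, s' => p a s s'
  | (t + 2), a, s, s' =>
      ∑ s'' : S, visit p π (t + 1) a s s'' * ∑ a'' : A, π s'' a'' * p a'' s'' s'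

/-- The Q-function `Q^π(a, s)`. -/
noncomputable def Qfun (p : A → S → S → ℝ) (r : S → A → ℝ) (γ : ℝ)
    (π : S → A → ℝ) (a : A) (s : S) : ℝ :=
  r s a + ∑' t : ℕ, γ ^ (t + 1) *
    ∑ s' : S, visit p π (t + 1) a s s' * ∑ a' : A, π s' a' * r s' a'

/-- The value function `V^π(s)`. -/
noncomputable def Vfun (p : A → S → S → ℝ) (r : S → A → ℝ) (γ : ℝ)
    (π : S → A → ℝ) (s : S) : ℝ :=
  ∑ a : A, π s a * Qfun p r γ π a s

/-- The advantage function `A^π(a, s)`. -/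
noncomputable def Adv (p : A → S → S → ℝ) (r : S → A → ℝ) (γ : ℝ)
    (π : S → A → ℝ) (a : A) (s : S) : ℝ :=
  Qfun p r γ π a s - Vfun p r γ π s

/-- The conditional discounted visitation probability `d^π(s' | a, s)`. -/
noncomputable def dvisit (p : A → S → S → ℝ) (γ : ℝ) (π : S → A → ℝ)
    (s' : S) (a : A) (s : S) : ℝ :=
  (1 - γ) * ∑' t : ℕ, γ ^ t * visit p π t a s s'

/-- The integrated discounted visitation probability `d^{π,ν}(s')`. -/
noncomputable def dnu (p : A → S → S → ℝ) (γ : ℝ) (ν : S → ℝ)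
    (π : S → A → ℝ) (s' : S) : ℝ :=
  ∑ s : S, ∑ a : A, π s a * ν s * dvisit p γ π s' a s

/-- The integrated value `V(π) = Σ_s ν(s) V^π(s)`. -/
noncomputable def IntV (p : A → S → S → ℝ) (r : S → A → ℝ) (γ : ℝ) (ν : S → ℝ)
    (π : S → A → ℝ) : ℝ :=
  ∑ s : S, ν s * Vfun p r γ π s

/-- The first-order term `η₁(π₁, π₂)`. -/
noncomputable def eta1 (p : A → S → S → ℝ) (r : S → A → ℝ) (γ : ℝ) (ν : S → ℝ)
    (π₁ π₂ : S → A → ℝ) : ℝ :=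
  ∑ a : A, ∑ s : S, π₁ s a * Adv p r γ π₂ a s * dnu p γ ν π₂ s

/-- The higher-order remainder `η₂(π₁, π₂)`. -/
noncomputable def eta2 (p : A → S → S → ℝ) (r : S → A → ℝ) (γ : ℝ) (ν : S → ℝ)
    (π₁ π₂ : S → A → ℝ) : ℝ :=
  ∑ a : A, ∑ s : S, (π₁ s a - π₂ s a) * Adv p r γ π₂ a s *
    (dnu p γ ν π₁ s - dnu p γ ν π₂ s)

/-- Total variation distance between two pmfs on a finite type. -/
noncomputable def DTV {X : Type} [Fintype X] (μ₁ μ₂ : X → ℝ) : ℝ :=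
  (1 / 2) * ∑ x : X, |μ₁ x - μ₂ x|

/-- Kullback–Leibler divergence between two pmfs on a finite type, valued in `EReal`
(equal to `⊤` if `μ₁` is not absolutely continuous w.r.t. `μ₂`). -/
noncomputable def DKL {X : Type} [Fintype X] (μ₁ μ₂ : X → ℝ) : EReal :=
  ∑ x : X, (if μ₁ x = 0 then (0 : EReal)
    else if μ₂ x = 0 then (⊤ : EReal)
    else ((μ₁ x * Real.log (μ₁ x / μ₂ x) : ℝ) : EReal))

/-- Conditional discounted stationary probability ratio `ω^π(a', s'; a, s)`. -/
noncomputable def ratio (p : A → S → S → ℝ) (γ : ℝ) (pinf : A → S → ℝ)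
    (π : S → A → ℝ) (a' : A) (s' : S) (a : A) (s : S) : ℝ :=
  (1 - γ) * ((if a' = a ∧ s' = s then 1 else 0) +
    ∑' t : ℕ, γ ^ (t + 1) * (π s' a' * visit p π (t + 1) a s s')) / pinf a' s'

/-- Integrated discounted stationary probability ratio `ω^{π,ν}(a', s')`. -/
noncomputable def rationu (p : A → S → S → ℝ) (γ : ℝ) (pinf : A → S → ℝ) (ν : S → ℝ)
    (π : S → A → ℝ) (a' : A) (s' : S) : ℝ :=
  ∑ a : A, ∑ s : S, π s a * ν s * ratio p γ pinf π a' s' a s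

/-- Marginal state distribution `p̄_t^{π,ν}` at time `t` when `S₀ ~ ν` and actions follow `π`. -/
def marg (p : A → S → S → ℝ) (π : S → A → ℝ) (ν : S → ℝ) : ℕ → S → ℝ
  | 0, s' => ν s'
  | (t + 1), s' => ∑ s : S, marg p π ν t s * ∑ a : A, π s a * p a s s'

/-- Conditional discounted state–action visitation `q^π(a', s'; a, s)`. -/
noncomputable def qvisit (p : A → S → S → ℝ) (γ : ℝ) (π : S → A → ℝ)
    (a' : A) (s' : S) (a : A) (s : S) : ℝ :=
  (1 - γ) * ((if a' = a ∧ s' = s then 1 else 0) +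
    ∑' t : ℕ, γ ^ (t + 1) * (π s' a' * visit p π (t + 1) a s s'))

/-- The estimating function `ψ(o) = ψ₁ + ψ₂(o) + ψ₃(o)` evaluated at a data tuple
`o = (s, a, rr, s')`, for nuisance functions `Ṽ = Vt`, `Ã = At`, `ω̃ = ωt`
(with `ωt a' s' a s = ω̃(a',s'; a,s)`) and `d̃ = dt` (with `dt s* a s = d̃(s* | a, s)`). -/
noncomputable def psi (γ : ℝ) (ν : S → ℝ) (π πold : S → A → ℝ)
    (Vt : S → ℝ) (At : A → S → ℝ) (ωt : A → S → A → S → ℝ) (dt : S → A → S → ℝ)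
    (s : S) (a : A) (rr : ℝ) (s' : S) : ℝ :=
  let dtnu : S → ℝ := fun sstar => ∑ a0 : A, ∑ s0 : S, πold s0 a0 * ν s0 * dt sstar a0 s0
  let ωtnu : A → S → ℝ := fun a1 s1 => ∑ a0 : A, ∑ s0 : S, πold s0 a0 * ν s0 * ωt a1 s1 a0 s0
  (∑ sstar : S, dtnu sstar * ∑ astar : A, π sstar astar * At astar sstar)
  + (1 / (1 - γ)) * ∑ sstar : S, dtnu sstar * ∑ astar : A,
      (π sstar astar - πold sstar astar) * ωt a s astar sstar *
        (rr + γ * Vt s' - Vt s - At a s)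
  + (ωtnu a s / (1 - γ)) * ∑ astar : A,
      (γ * ∑ a' : A, πold s' a' * ∑ sstar : S, dt sstar a' s' * π sstar astar * At astar sstar
       - ∑ sstar : S, dt sstar a s * π sstar astar * At astar sstar
       + (1 - γ) * π s astar * At astar s)

/-- The expectation `E[ψ(O)]` of the estimating function, where `(A₀, S₀) ~ p_∞`,
`S₁ | (A₀, S₀) ~ p(· | A₀, S₀)` and `E[R₀ | A₀, S₀] = r(S₀, A₀)`;  since `ψ` is affine
in its reward argument with a coefficient not depending on `s'`, this finite sum is
exactly the expectation of `ψ(O)`. -/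
noncomputable def Epsi (p : A → S → S → ℝ) (r : S → A → ℝ) (γ : ℝ) (ν : S → ℝ)
    (pinf : A → S → ℝ) (π πold : S → A → ℝ)
    (Vt : S → ℝ) (At : A → S → ℝ) (ωt : A → S → A → S → ℝ) (dt : S → A → S → ℝ) : ℝ :=
  ∑ a : A, ∑ s : S, pinf a s * ∑ s' : S, p a s s' *
    psi γ ν π πold Vt At ωt dt s a (r s a) s'

/-! ### Auxiliary development for the performance-difference identity -/

section PDI

variable {S A : Type} [Fintype S] [Fintype A] [DecidableEq S] [DecidableEq A]

/-- One-step state transition matrix induced by policy `π`. -/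
noncomputable def Pmat (p : A → S → S → ℝ) (π : S → A → ℝ) (s s' : S) : ℝ :=
  ∑ a : A, π s a * p a s s'

/-- Powers of the transition matrix. -/
noncomputable def Ppow (p : A → S → S → ℝ) (π : S → A → ℝ) : ℕ → S → S → ℝ
  | 0, s, s' => if s' = s then 1 else 0
  | (t + 1), s, s' => ∑ x : S, Ppow p π t s x * Pmat p π x s'

variable {p : A → S → S → ℝ} {π : S → A → ℝ} {r : S → A → ℝ} {γ : ℝ} {Rmax : ℝ}

set_option linter.unusedSectionVars false

lemma sum_exchange {X Y : Type} [Fintype X] [Fintype Y] (f : Y → ℝ) (g : Y → X → ℝ)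
    (h : X → ℝ) :
    ∑ x : X, (∑ y : Y, f y * g y x) * h x = ∑ y : Y, f y * ∑ x : X, g y x * h x := by
  simp only [Finset.sum_mul, Finset.mul_sum, mul_assoc]
  exact Finset.sum_comm

lemma Pmat_nonneg (hp : IsKernel p) (hπ : IsPolicy π) (s s' : S) :
    0 ≤ Pmat p π s s' :=
  Finset.sum_nonneg fun a _ => mul_nonneg ((hπ s).1 a) ((hp a s).1 s')

lemma Pmat_sum (hp : IsKernel p) (hπ : IsPolicy π) (s : S) :
    ∑ s' : S, Pmat p π s s' = 1 := by
  unfold Pmat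
  rw [Finset.sum_comm]
  have h : ∀ a : A, ∑ s' : S, π s a * p a s s' = π s a := fun a => by
    rw [← Finset.mul_sum, (hp a s).2, mul_one]
  simp only [h]
  exact (hπ s).2

lemma Ppow_nonneg (hp : IsKernel p) (hπ : IsPolicy π) (t : ℕ) (s s' : S) :
    0 ≤ Ppow p π t s s' := by
  induction t generalizing s s' with
  | zero => unfold Ppow; split <;> norm_num
  | succ t ih =>
      exact Finset.sum_nonneg fun x _ => mul_nonneg (ih s x) (Pmat_nonneg hp hπ x s')

lemma Ppow_sum (hp : IsKernel p) (hπ : IsPolicy π) (t : ℕ) (s : S) :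
    ∑ s' : S, Ppow p π t s s' = 1 := by
  induction t with
  | zero => simp [Ppow]
  | succ t ih =>
      unfold Ppow
      rw [Finset.sum_comm]
      simp only [← Finset.mul_sum, Pmat_sum hp hπ, mul_one]
      exact ih

/-- Powers commute: left-multiplication form of the recursion. -/
lemma Ppow_succ_left (t : ℕ) (s s' : S) :
    Ppow p π (t + 1) s s' = ∑ x : S, Pmat p π s x * Ppow p π t x s' := by
  induction t generalizing s s' with
  | zero => simp [Ppow]
  | succ t ih =>
      show ∑ x : S, Ppow p π (t + 1) s x * Pmat p π x s' = _
      conv_lhs => simp only [ih]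
      rw [sum_exchange]
      rfl

/-- `visit (t+1)` in terms of matrix powers. -/
lemma visit_eq (t : ℕ) (a : A) (s s' : S) :
    visit p π (t + 1) a s s' = ∑ s'' : S, p a s s'' * Ppow p π t s'' s' := by
  induction t generalizing s' with
  | zero => simp [visit, Ppow]
  | succ t ih =>
      show ∑ x : S, visit p π (t + 1) a s x * (∑ a'' : A, π x a'' * p a'' x s') = _
      simp only [ih]
      rw [sum_exchange]
      rfl

lemma visit_nonneg (hp : IsKernel p) (hπ : IsPolicy π) (t : ℕ) (a : A) (s s' : S) :
    0 ≤ visit p π t a s s' := by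
  cases t with
  | zero => unfold visit; split <;> norm_num
  | succ t =>
      rw [visit_eq]
      exact Finset.sum_nonneg fun x _ => mul_nonneg ((hp a s).1 x) (Ppow_nonneg hp hπ t x s')

lemma visit_sum (hp : IsKernel p) (hπ : IsPolicy π) (t : ℕ) (a : A) (s : S) :
    ∑ s' : S, visit p π (t + 1) a s s' = 1 := by
  simp only [visit_eq]
  rw [Finset.sum_comm]
  simp only [← Finset.mul_sum, Ppow_sum hp hπ, mul_one]
  exact (hp a s).2

lemma visit_le_one (hp : IsKernel p) (hπ : IsPolicy π) (t : ℕ) (a : A) (s s' : S) :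
    visit p π t a s s' ≤ 1 := by
  cases t with
  | zero => unfold visit; split <;> norm_num
  | succ t =>
      calc visit p π (t + 1) a s s'
          ≤ ∑ x : S, visit p π (t + 1) a s x :=
            Finset.single_le_sum (fun x _ => visit_nonneg hp hπ _ a s x) (Finset.mem_univ s')
        _ = 1 := visit_sum hp hπ t a s

/-- Policy-averaged visitation equals matrix power. -/
lemma pol_visit (hπ : IsPolicy π) (t : ℕ) (s s' : S) :
    ∑ a : A, π s a * visit p π t a s s' = Ppow p π t s s' := by
  cases t with
  | zero =>
      unfold visit Ppow
      rw [← Finset.sum_mul, (hπ s).2, one_mul]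
  | succ t =>
      simp only [visit_eq]
      rw [Ppow_succ_left, ← sum_exchange]
      rfl

/-- Expected one-step reward under `π`. -/
noncomputable def rbar (r : S → A → ℝ) (π : S → A → ℝ) (s : S) : ℝ :=
  ∑ a : A, π s a * r s a

/-- `t`-step expected reward from state `s`. -/
noncomputable def gse (p : A → S → S → ℝ) (r : S → A → ℝ) (π : S → A → ℝ)
    (t : ℕ) (s : S) : ℝ :=
  ∑ s' : S, Ppow p π t s s' * rbar r π s'

/-- Series form of the value function. -/
noncomputable def Vser (p : A → S → S → ℝ) (r : S → A → ℝ) (γ : ℝ) (π : S → A → ℝ)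
    (s : S) : ℝ :=
  ∑' t : ℕ, γ ^ t * gse p r π t s

lemma abs_wsum_le {X : Type} [Fintype X] {w f : X → ℝ} {C : ℝ}
    (hw : ∀ x, 0 ≤ w x) (hw1 : ∑ x : X, w x = 1) (hf : ∀ x, |f x| ≤ C) :
    |∑ x : X, w x * f x| ≤ C := by
  calc |∑ x : X, w x * f x| ≤ ∑ x : X, |w x * f x| := Finset.abs_sum_le_sum_abs _ _
    _ = ∑ x : X, w x * |f x| := by
        refine Finset.sum_congr rfl fun x _ => ?_
        rw [abs_mul, abs_of_nonneg (hw x)]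
    _ ≤ ∑ x : X, w x * C := Finset.sum_le_sum fun x _ =>
        mul_le_mul_of_nonneg_left (hf x) (hw x)
    _ = C := by rw [← Finset.sum_mul, hw1, one_mul]

lemma abs_rbar_le (hπ : IsPolicy π) (hr : ∀ s a, |r s a| ≤ Rmax) (s : S) :
    |rbar r π s| ≤ Rmax :=
  abs_wsum_le (hπ s).1 (hπ s).2 (hr s)

lemma abs_gse_le (hp : IsKernel p) (hπ : IsPolicy π) (hr : ∀ s a, |r s a| ≤ Rmax)
    (t : ℕ) (s : S) : |gse p r π t s| ≤ Rmax :=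
  abs_wsum_le (Ppow_nonneg hp hπ t s) (Ppow_sum hp hπ t s) (abs_rbar_le hπ hr)

lemma summable_geom (hγ0 : 0 ≤ γ) (hγ1 : γ < 1) {f : ℕ → ℝ} {C : ℝ}
    (hf : ∀ t, |f t| ≤ C) : Summable fun t : ℕ => γ ^ t * f t := by
  refine Summable.of_norm_bounded (g := fun t => γ ^ t * C)
    ((summable_geometric_of_lt_one hγ0 hγ1).mul_right C) fun t => ?_
  rw [Real.norm_eq_abs, abs_mul, abs_pow, abs_of_nonneg hγ0]
  exact mul_le_mul_of_nonneg_left (hf t) (pow_nonneg hγ0 t)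

lemma summable_gse (hp : IsKernel p) (hπ : IsPolicy π) (hr : ∀ s a, |r s a| ≤ Rmax)
    (hγ0 : 0 ≤ γ) (hγ1 : γ < 1) (s : S) :
    Summable fun t : ℕ => γ ^ t * gse p r π t s :=
  summable_geom hγ0 hγ1 (fun t => abs_gse_le hp hπ hr t s)

lemma gse_succ (t : ℕ) (s : S) :
    gse p r π (t + 1) s = ∑ x : S, Pmat p π s x * gse p r π t x := by
  unfold gse
  simp only [Ppow_succ_left]
  rw [sum_exchange]

lemma pmf_le_one {X : Type} [Fintype X] {f : X → ℝ} (hf : IsPMF f) (x : X) : f x ≤ 1 := by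
  calc f x ≤ ∑ y : X, f y := Finset.single_le_sum (fun y _ => hf.1 y) (Finset.mem_univ x)
    _ = 1 := hf.2

lemma abs_visit_rbar_le (hp : IsKernel p) (hπ : IsPolicy π) (hr : ∀ s a, |r s a| ≤ Rmax)
    (a : A) (t : ℕ) (s : S) :
    |∑ s' : S, visit p π (t + 1) a s s' * rbar r π s'| ≤ Rmax :=
  abs_wsum_le (fun s' => visit_nonneg hp hπ _ a s s') (visit_sum hp hπ t a s)
    (abs_rbar_le hπ hr)

lemma Vfun_eq_Vser (hp : IsKernel p) (hπ : IsPolicy π) (hr : ∀ s a, |r s a| ≤ Rmax)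
    (hγ0 : 0 ≤ γ) (hγ1 : γ < 1) (s : S) :
    Vfun p r γ π s = Vser p r γ π s := by
  have hsum : ∀ a : A, Summable (fun t : ℕ =>
      γ ^ t * (γ * (π s a * ∑ s' : S, visit p π (t + 1) a s s' * rbar r π s'))) := by
    intro a
    refine summable_geom hγ0 hγ1 (C := γ * Rmax) fun t => ?_
    rw [abs_mul, abs_mul, abs_of_nonneg hγ0, abs_of_nonneg ((hπ s).1 a)]
    refine mul_le_mul_of_nonneg_left ?_ hγ0
    calc π s a * |∑ s' : S, visit p π (t + 1) a s s' * rbar r π s'|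
        ≤ 1 * Rmax := mul_le_mul (pmf_le_one (hπ s) a) (abs_visit_rbar_le hp hπ hr a t s)
          (abs_nonneg _) zero_le_one
      _ = Rmax := one_mul _
  have h2 : ∀ a : A, π s a * ∑' t : ℕ, γ ^ (t + 1) *
      ∑ s' : S, visit p π (t + 1) a s s' * ∑ a' : A, π s' a' * r s' a'
      = ∑' t : ℕ, γ ^ t * (γ * (π s a * ∑ s' : S, visit p π (t + 1) a s s' * rbar r π s')) := by
    intro a
    rw [← tsum_mul_left]
    refine tsum_congr fun t => ?_
    show π s a * (γ ^ (t + 1) * ∑ s' : S, visit p π (t + 1) a s s' * rbar r π s') = _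
    ring
  have h3 : ∀ t : ℕ, ∑ a : A, γ ^ t * (γ * (π s a *
      ∑ s' : S, visit p π (t + 1) a s s' * rbar r π s')) = γ ^ (t + 1) * gse p r π (t + 1) s := by
    intro t
    have he : ∀ a : A, γ ^ t * (γ * (π s a * ∑ s' : S, visit p π (t + 1) a s s' * rbar r π s'))
        = γ ^ (t + 1) * (π s a * ∑ s' : S, visit p π (t + 1) a s s' * rbar r π s') := by
      intro a; ring
    rw [Finset.sum_congr rfl fun a _ => he a, ← Finset.mul_sum, ← sum_exchange]
    congr 1
    refine Finset.sum_congr rfl fun s' _ => ?_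
    rw [pol_visit hπ]
  have hV : Vser p r γ π s = gse p r π 0 s + ∑' t : ℕ, γ ^ (t + 1) * gse p r π (t + 1) s := by
    rw [Vser, Summable.tsum_eq_zero_add (summable_gse hp hπ hr hγ0 hγ1 s), pow_zero, one_mul]
  have hg0 : gse p r π 0 s = rbar r π s := by
    simp [gse, Ppow, ite_mul, one_mul, zero_mul]
  unfold Vfun Qfun
  simp only [mul_add, Finset.sum_add_distrib]
  rw [Finset.sum_congr rfl fun a _ => h2 a, ← Summable.tsum_finsetSum fun a _ => hsum a]
  rw [tsum_congr h3, hV, hg0]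
  rfl

lemma abs_Vser_le (hp : IsKernel p) (hπ : IsPolicy π) (hr : ∀ s a, |r s a| ≤ Rmax)
    (hγ0 : 0 ≤ γ) (hγ1 : γ < 1) (s : S) :
    |Vser p r γ π s| ≤ Rmax * (1 - γ)⁻¹ := by
  have h1 : Summable (fun t : ℕ => |γ ^ t * gse p r π t s|) :=
    (summable_gse hp hπ hr hγ0 hγ1 s).abs
  have h0 : Summable (fun t : ℕ => ‖γ ^ t * gse p r π t s‖) := by
    simpa only [Real.norm_eq_abs] using h1
  unfold Vser
  calc |∑' t : ℕ, γ ^ t * gse p r π t s| ≤ ∑' t : ℕ, |γ ^ t * gse p r π t s| := by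
        simpa only [Real.norm_eq_abs] using norm_tsum_le_tsum_norm h0
    _ ≤ ∑' t : ℕ, γ ^ t * Rmax := by
        refine Summable.tsum_le_tsum (fun t => ?_) h1
          ((summable_geometric_of_lt_one hγ0 hγ1).mul_right Rmax)
        rw [abs_mul, abs_pow, abs_of_nonneg hγ0]
        exact mul_le_mul_of_nonneg_left (abs_gse_le hp hπ hr t s) (pow_nonneg hγ0 t)
    _ = Rmax * (1 - γ)⁻¹ := by
        rw [tsum_mul_right, tsum_geometric_of_lt_one hγ0 hγ1, mul_comm]

lemma Qfun_bellman (hp : IsKernel p) (hπ : IsPolicy π) (hr : ∀ s a, |r s a| ≤ Rmax)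
    (hγ0 : 0 ≤ γ) (hγ1 : γ < 1) (a : A) (s : S) :
    Qfun p r γ π a s = r s a + γ * ∑ s' : S, p a s s' * Vfun p r γ π s' := by
  have hsum : ∀ s'' : S, Summable (fun t : ℕ =>
      γ ^ t * (γ * (p a s s'' * gse p r π t s''))) := by
    intro s''
    refine summable_geom hγ0 hγ1 (C := γ * Rmax) fun t => ?_
    rw [abs_mul, abs_mul, abs_of_nonneg hγ0, abs_of_nonneg ((hp a s).1 s'')]
    refine mul_le_mul_of_nonneg_left ?_ hγ0
    calc p a s s'' * |gse p r π t s''|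
        ≤ 1 * Rmax := mul_le_mul (pmf_le_one (hp a s) s'') (abs_gse_le hp hπ hr t s'')
          (abs_nonneg _) zero_le_one
      _ = Rmax := one_mul _
  unfold Qfun
  congr 1
  have h1 : ∀ t : ℕ, γ ^ (t + 1) *
      ∑ s' : S, visit p π (t + 1) a s s' * ∑ a' : A, π s' a' * r s' a'
      = ∑ s'' : S, γ ^ t * (γ * (p a s s'' * gse p r π t s'')) := by
    intro t
    have : (∑ s' : S, visit p π (t + 1) a s s' * ∑ a' : A, π s' a' * r s' a')
        = ∑ s'' : S, p a s s'' * gse p r π t s'' := by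
      show (∑ s' : S, visit p π (t + 1) a s s' * rbar r π s') = _
      simp only [visit_eq]
      rw [sum_exchange]
      rfl
    rw [this, Finset.mul_sum]
    refine Finset.sum_congr rfl fun s'' _ => ?_
    ring
  rw [tsum_congr h1, Summable.tsum_finsetSum fun s'' _ => hsum s'', Finset.mul_sum]
  refine Finset.sum_congr rfl fun s'' _ => ?_
  rw [Vfun_eq_Vser hp hπ hr hγ0 hγ1, Vser]
  rw [tsum_congr (fun t => show γ ^ t * (γ * (p a s s'' * gse p r π t s''))
    = (γ * p a s s'') * (γ ^ t * gse p r π t s'') by ring), tsum_mul_left]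
  ring

/-- Marginal state distribution at time `t` starting from `ν`. -/
noncomputable def mgt (p : A → S → S → ℝ) (π : S → A → ℝ) (ν : S → ℝ) (t : ℕ) (s' : S) : ℝ :=
  ∑ s : S, ν s * Ppow p π t s s'

variable {ν : S → ℝ}

lemma mgt_nonneg (hp : IsKernel p) (hπ : IsPolicy π) (hν : IsPMF ν) (t : ℕ) (s' : S) :
    0 ≤ mgt p π ν t s' :=
  Finset.sum_nonneg fun s _ => mul_nonneg (hν.1 s) (Ppow_nonneg hp hπ t s s')

lemma mgt_sum (hp : IsKernel p) (hπ : IsPolicy π) (hν : IsPMF ν) (t : ℕ) :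
    ∑ s' : S, mgt p π ν t s' = 1 := by
  unfold mgt
  rw [Finset.sum_comm]
  simp only [← Finset.mul_sum, Ppow_sum hp hπ, mul_one]
  exact hν.2

lemma mgt_le_one (hp : IsKernel p) (hπ : IsPolicy π) (hν : IsPMF ν) (t : ℕ) (s' : S) :
    mgt p π ν t s' ≤ 1 := by
  calc mgt p π ν t s' ≤ ∑ x : S, mgt p π ν t x :=
        Finset.single_le_sum (fun x _ => mgt_nonneg hp hπ hν t x) (Finset.mem_univ s')
    _ = 1 := mgt_sum hp hπ hν t

lemma mgt_zero (s' : S) : mgt p π ν 0 s' = ν s' := by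
  simp [mgt, Ppow, mul_ite, mul_one, mul_zero, Finset.sum_ite_eq]

lemma mgt_succ (t : ℕ) (s' : S) :
    mgt p π ν (t + 1) s' = ∑ x : S, mgt p π ν t x * Pmat p π x s' := by
  show ∑ s : S, ν s * Ppow p π (t + 1) s s' = _
  have h : ∀ s : S, ν s * Ppow p π (t + 1) s s'
      = ν s * ∑ x : S, Ppow p π t s x * Pmat p π x s' := fun s => rfl
  rw [Finset.sum_congr rfl fun s _ => h s, ← sum_exchange]
  rfl

lemma dnu_eq (hp : IsKernel p) (hπ : IsPolicy π) (hγ0 : 0 ≤ γ) (hγ1 : γ < 1)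
    (hν : IsPMF ν) (s' : S) :
    dnu p γ ν π s' = (1 - γ) * ∑' t : ℕ, γ ^ t * mgt p π ν t s' := by
  have hsum : ∀ (s : S) (a : A), Summable (fun t : ℕ =>
      γ ^ t * ((1 - γ) * (π s a * ν s) * visit p π t a s s')) := by
    intro s a
    refine summable_geom hγ0 hγ1 (C := (1 - γ) * (π s a * ν s)) fun t => ?_
    have hc : 0 ≤ (1 - γ) * (π s a * ν s) :=
      mul_nonneg (by linarith) (mul_nonneg ((hπ s).1 a) (hν.1 s))
    rw [abs_mul, abs_of_nonneg hc, abs_of_nonneg (visit_nonneg hp hπ t a s s')]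
    exact mul_le_of_le_one_right hc (visit_le_one hp hπ t a s s')
  have key : ∀ (s : S) (a : A), π s a * ν s * ((1 - γ) * ∑' t : ℕ, γ ^ t * visit p π t a s s')
      = ∑' t : ℕ, γ ^ t * ((1 - γ) * (π s a * ν s) * visit p π t a s s') := by
    intro s a
    rw [show π s a * ν s * ((1 - γ) * ∑' t : ℕ, γ ^ t * visit p π t a s s')
      = ((1 - γ) * (π s a * ν s)) * ∑' t : ℕ, γ ^ t * visit p π t a s s' by ring,
      ← tsum_mul_left]
    exact tsum_congr fun t => by ring
  have ht : ∀ t : ℕ, ∑ s : S, ∑ a : A, γ ^ t * ((1 - γ) * (π s a * ν s) * visit p π t a s s')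
      = γ ^ t * ((1 - γ) * mgt p π ν t s') := by
    intro t
    have hs : ∀ s : S, ∑ a : A, γ ^ t * ((1 - γ) * (π s a * ν s) * visit p π t a s s')
        = γ ^ t * ((1 - γ) * (ν s * Ppow p π t s s')) := by
      intro s
      rw [Finset.sum_congr rfl fun a _ =>
        show γ ^ t * ((1 - γ) * (π s a * ν s) * visit p π t a s s')
          = (γ ^ t * ((1 - γ) * ν s)) * (π s a * visit p π t a s s') by ring,
        ← Finset.mul_sum, pol_visit hπ]
      ring
    rw [Finset.sum_congr rfl fun s _ => hs s]
    unfold mgt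
    rw [Finset.mul_sum, Finset.mul_sum]
  unfold dnu dvisit
  rw [Finset.sum_congr rfl fun s _ => Finset.sum_congr rfl fun a _ => key s a]
  rw [Finset.sum_congr rfl fun s _ => (Summable.tsum_finsetSum fun a _ => hsum s a).symm]
  rw [← Summable.tsum_finsetSum fun s (_ : s ∈ Finset.univ) => summable_sum fun a _ => hsum s a]
  rw [tsum_congr ht]
  rw [tsum_congr fun t : ℕ => show γ ^ t * ((1 - γ) * mgt p π ν t s')
    = (1 - γ) * (γ ^ t * mgt p π ν t s') by ring, tsum_mul_left]

lemma tsum_shift_combo {γ : ℝ} (hγ0 : 0 ≤ γ) (hγ1 : γ < 1) {u v : ℕ → ℝ} {Cu Cv : ℝ}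
    (hu : ∀ t, |u t| ≤ Cu) (hv : ∀ t, |v t| ≤ Cv) :
    ∑' t : ℕ, γ ^ t * ((1 - γ) * (u t + γ * v (t + 1) - v t))
      = (1 - γ) * ((∑' t : ℕ, γ ^ t * u t) - v 0) := by
  have su : Summable fun t : ℕ => γ ^ t * u t := summable_geom hγ0 hγ1 hu
  have sv : Summable fun t : ℕ => γ ^ t * v t := summable_geom hγ0 hγ1 hv
  have sv' : Summable fun t : ℕ => γ ^ (t + 1) * v (t + 1) := by
    refine (summable_geom hγ0 hγ1 (C := γ * Cv)
      (f := fun t => γ * v (t + 1)) fun t => ?_).congr fun t => by ring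
    rw [abs_mul, abs_of_nonneg hγ0]
    exact mul_le_mul_of_nonneg_left (hv (t + 1)) hγ0
  have hshift : ∑' t : ℕ, γ ^ t * v t = v 0 + ∑' t : ℕ, γ ^ (t + 1) * v (t + 1) := by
    rw [Summable.tsum_eq_zero_add sv, pow_zero, one_mul]
  calc ∑' t : ℕ, γ ^ t * ((1 - γ) * (u t + γ * v (t + 1) - v t))
      = (1 - γ) * ∑' t : ℕ, (γ ^ t * u t + (γ ^ (t + 1) * v (t + 1) - γ ^ t * v t)) := by
        rw [← tsum_mul_left]
        exact tsum_congr fun t => by ring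
    _ = (1 - γ) * ((∑' t : ℕ, γ ^ t * u t)
        + ((∑' t : ℕ, γ ^ (t + 1) * v (t + 1)) - ∑' t : ℕ, γ ^ t * v t)) := by
        rw [Summable.tsum_add su (sv'.sub sv), Summable.tsum_sub sv' sv]
    _ = (1 - γ) * ((∑' t : ℕ, γ ^ t * u t) - v 0) := by
        rw [hshift]; ring

lemma tsum_u_eq (hp : IsKernel p) (hπ : IsPolicy π) (hν : IsPMF ν)
    (hr : ∀ s a, |r s a| ≤ Rmax) (hγ0 : 0 ≤ γ) (hγ1 : γ < 1) :
    ∑' t : ℕ, γ ^ t * (∑ s : S, mgt p π ν t s * rbar r π s)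
      = ∑ s : S, ν s * Vser p r γ π s := by
  have hsm : ∀ s0 : S, Summable fun t : ℕ => γ ^ t * (ν s0 * gse p r π t s0) := by
    intro s0
    refine summable_geom hγ0 hγ1 (C := ν s0 * Rmax) fun t => ?_
    rw [abs_mul, abs_of_nonneg (hν.1 s0)]
    exact mul_le_mul_of_nonneg_left (abs_gse_le hp hπ hr t s0) (hν.1 s0)
  have h1 : ∀ t : ℕ, γ ^ t * (∑ s : S, mgt p π ν t s * rbar r π s)
      = ∑ s0 : S, γ ^ t * (ν s0 * gse p r π t s0) := by
    intro t
    unfold mgt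
    rw [sum_exchange, Finset.mul_sum]
    rfl
  rw [tsum_congr h1, Summable.tsum_finsetSum fun s0 _ => hsm s0]
  refine Finset.sum_congr rfl fun s0 _ => ?_
  rw [tsum_congr fun t : ℕ => show γ ^ t * (ν s0 * gse p r π t s0)
    = ν s0 * (γ ^ t * gse p r π t s0) by ring, tsum_mul_left]
  rfl

end PDI
theorem performance_difference_identity {S A : Type} [Fintype S] [Fintype A] [DecidableEq S] [DecidableEq A]
    [Nonempty S] [Nonempty A]
    (p : A → S → S → ℝ) (r : S → A → ℝ) (γ : ℝ) (ν : S → ℝ) (Rmax : ℝ)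
    (hp : IsKernel p) (hr : ∀ s a, |r s a| ≤ Rmax)
    (hγ0 : 0 ≤ γ) (hγ1 : γ < 1) (hν : IsPMF ν)
    (πnew πold : S → A → ℝ) (hnew : IsPolicy πnew) (hold : IsPolicy πold) :
    (1 - γ) * (IntV p r γ ν πnew - IntV p r γ ν πold) =
      ∑ a : A, ∑ s : S, πnew s a * Adv p r γ πold a s * dnu p γ ν πnew s := by

  classical
  have hVold_bd : ∀ s : S, |Vfun p r γ πold s| ≤ Rmax * (1 - γ)⁻¹ := fun s => by
    rw [Vfun_eq_Vser hp hold hr hγ0 hγ1]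
    exact abs_Vser_le hp hold hr hγ0 hγ1 s
  have hu_bd : ∀ t : ℕ, |∑ s : S, mgt p πnew ν t s * rbar r πnew s| ≤ Rmax := fun t =>
    abs_wsum_le (fun s => mgt_nonneg hp hnew hν t s) (mgt_sum hp hnew hν t)
      (abs_rbar_le hnew hr)
  have hv_bd : ∀ t : ℕ, |∑ s : S, mgt p πnew ν t s * Vfun p r γ πold s|
      ≤ Rmax * (1 - γ)⁻¹ := fun t =>
    abs_wsum_le (fun s => mgt_nonneg hp hnew hν t s) (mgt_sum hp hnew hν t) hVold_bd
  have hsF : ∀ s : S, ∑ a : A, πnew s a * Adv p r γ πold a s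
      = rbar r πnew s + γ * (∑ x : S, Pmat p πnew s x * Vfun p r γ πold x)
        - Vfun p r γ πold s := by
    intro s
    unfold Adv
    calc ∑ a : A, πnew s a * (Qfun p r γ πold a s - Vfun p r γ πold s)
        = ∑ a : A, (πnew s a * Qfun p r γ πold a s - πnew s a * Vfun p r γ πold s) :=
          Finset.sum_congr rfl fun a _ => by ring
      _ = (∑ a : A, πnew s a * Qfun p r γ πold a s) - Vfun p r γ πold s := by
          rw [Finset.sum_sub_distrib, ← Finset.sum_mul, (hnew s).2, one_mul]
      _ = (∑ a : A, (πnew s a * r s a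
            + γ * (πnew s a * ∑ x : S, p a s x * Vfun p r γ πold x)))
            - Vfun p r γ πold s := by
          congr 1
          refine Finset.sum_congr rfl fun a _ => ?_
          rw [Qfun_bellman hp hold hr hγ0 hγ1]
          ring
      _ = _ := by
          rw [Finset.sum_add_distrib, ← Finset.mul_sum, ← sum_exchange]
          rfl
  have hswap : ∀ s : S, Summable fun t : ℕ => γ ^ t * ((1 - γ) * (mgt p πnew ν t s *
      (rbar r πnew s + γ * (∑ x : S, Pmat p πnew s x * Vfun p r γ πold x)
        - Vfun p r γ πold s))) := by
    intro s
    refine summable_geom hγ0 hγ1 (C := (1 - γ) * |rbar r πnew s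
      + γ * (∑ x : S, Pmat p πnew s x * Vfun p r γ πold x) - Vfun p r γ πold s|) fun t => ?_
    rw [abs_mul, abs_of_nonneg (by linarith : (0:ℝ) ≤ 1 - γ), abs_mul,
      abs_of_nonneg (mgt_nonneg hp hnew hν t s)]
    refine mul_le_mul_of_nonneg_left ?_ (by linarith)
    calc mgt p πnew ν t s * |rbar r πnew s
          + γ * (∑ x : S, Pmat p πnew s x * Vfun p r γ πold x) - Vfun p r γ πold s|
        ≤ 1 * |rbar r πnew s
          + γ * (∑ x : S, Pmat p πnew s x * Vfun p r γ πold x) - Vfun p r γ πold s| :=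
          mul_le_mul_of_nonneg_right (mgt_le_one hp hnew hν t s) (abs_nonneg _)
      _ = _ := one_mul _
  have key2 : ∀ t : ℕ, ∑ s : S, mgt p πnew ν t s *
      (rbar r πnew s + γ * (∑ x : S, Pmat p πnew s x * Vfun p r γ πold x)
        - Vfun p r γ πold s)
      = (∑ s : S, mgt p πnew ν t s * rbar r πnew s)
        + γ * (∑ s : S, mgt p πnew ν (t + 1) s * Vfun p r γ πold s)
        - ∑ s : S, mgt p πnew ν t s * Vfun p r γ πold s := by
    intro t
    have h1 : ∑ s : S, mgt p πnew ν t s *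
        (rbar r πnew s + γ * (∑ x : S, Pmat p πnew s x * Vfun p r γ πold x)
          - Vfun p r γ πold s)
        = ∑ s : S, (mgt p πnew ν t s * rbar r πnew s
          + γ * (mgt p πnew ν t s * ∑ x : S, Pmat p πnew s x * Vfun p r γ πold x)
          - mgt p πnew ν t s * Vfun p r γ πold s) :=
      Finset.sum_congr rfl fun s _ => by ring
    rw [h1, Finset.sum_sub_distrib, Finset.sum_add_distrib, ← Finset.mul_sum, ← sum_exchange]
    have hmid : ∑ x : S, (∑ s : S, mgt p πnew ν t s * Pmat p πnew s x) * Vfun p r γ πold x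
        = ∑ s : S, mgt p πnew ν (t + 1) s * Vfun p r γ πold s :=
      Finset.sum_congr rfl fun x _ => by rw [← mgt_succ]
    rw [hmid]
  symm
  calc ∑ a : A, ∑ s : S, πnew s a * Adv p r γ πold a s * dnu p γ ν πnew s
      = ∑ s : S, ∑ a : A, πnew s a * Adv p r γ πold a s * dnu p γ ν πnew s :=
        Finset.sum_comm
    _ = ∑ s : S, (∑ a : A, πnew s a * Adv p r γ πold a s) * dnu p γ ν πnew s :=
        Finset.sum_congr rfl fun s _ => (Finset.sum_mul _ _ _).symm
    _ = ∑ s : S, ∑' t : ℕ, γ ^ t * ((1 - γ) * (mgt p πnew ν t s *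
          (rbar r πnew s + γ * (∑ x : S, Pmat p πnew s x * Vfun p r γ πold x)
            - Vfun p r γ πold s))) := by
        refine Finset.sum_congr rfl fun s _ => ?_
        rw [hsF s, dnu_eq hp hnew hγ0 hγ1 hν,
          show (rbar r πnew s + γ * (∑ x : S, Pmat p πnew s x * Vfun p r γ πold x)
              - Vfun p r γ πold s) * ((1 - γ) * ∑' t : ℕ, γ ^ t * mgt p πnew ν t s)
            = ((1 - γ) * (rbar r πnew s
              + γ * (∑ x : S, Pmat p πnew s x * Vfun p r γ πold x)
              - Vfun p r γ πold s)) * ∑' t : ℕ, γ ^ t * mgt p πnew ν t s by ring,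
          ← tsum_mul_left]
        exact tsum_congr fun t => by ring
    _ = ∑' t : ℕ, ∑ s : S, γ ^ t * ((1 - γ) * (mgt p πnew ν t s *
          (rbar r πnew s + γ * (∑ x : S, Pmat p πnew s x * Vfun p r γ πold x)
            - Vfun p r γ πold s))) :=
        (Summable.tsum_finsetSum fun s _ => hswap s).symm
    _ = ∑' t : ℕ, γ ^ t * ((1 - γ) * ((∑ s : S, mgt p πnew ν t s * rbar r πnew s)
          + γ * (∑ s : S, mgt p πnew ν (t + 1) s * Vfun p r γ πold s)
          - ∑ s : S, mgt p πnew ν t s * Vfun p r γ πold s)) := by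
        refine tsum_congr fun t => ?_
        rw [← Finset.mul_sum, ← Finset.mul_sum, key2 t]
    _ = (1 - γ) * ((∑' t : ℕ, γ ^ t * (∑ s : S, mgt p πnew ν t s * rbar r πnew s))
          - ∑ s : S, mgt p πnew ν 0 s * Vfun p r γ πold s) :=
        tsum_shift_combo hγ0 hγ1 hu_bd hv_bd
    _ = (1 - γ) * (IntV p r γ ν πnew - IntV p r γ ν πold) := by
        rw [tsum_u_eq hp hnew hν hr hγ0 hγ1]
        have h0 : ∑ s : S, mgt p πnew ν 0 s * Vfun p r γ πold s = IntV p r γ ν πold := by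
          unfold IntV
          exact Finset.sum_congr rfl fun s _ => by rw [mgt_zero, mul_comm]
        have hN : ∑ s : S, ν s * Vser p r γ πnew s = IntV p r γ ν πnew := by
          unfold IntV
          exact Finset.sum_congr rfl fun s _ => by
            rw [Vfun_eq_Vser hp hnew hr hγ0 hγ1]
        rw [h0, hN]

end VEPO
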